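/- If an undirected graph U is chordal, then for every edge {A,B} of U there exist two acyclic orientations of U, each having no unshielded collider, such that one orients the edge as A→B and the other as A←B. -/

import Mathlib

/-- An undirected graph is chordal: every cycle of length at least 4 has a chord,
i.e. an edge between two vertices of the cycle that is not an edge of the cycle. -/
def ChordalGraph {V : Type*} (G : SimpleGraph V) : Prop :=
  ∀ ⦃v : V⦄ (c : G.Walk v v), c.IsCycle → 4 ≤ c.length →
    ∃ a b, a ∈ c.support ∧ b ∈ c.support ∧ G.Adj a b ∧ s(a, b) ∉ c.edges

/-- D is an orientation of the undirected graph G: each edge receives exactly one direction. -/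
def IsOrientationOf {V : Type*} (G : SimpleGraph V) (D : V → V → Prop) : Prop :=
  (∀ a b, D a b → G.Adj a b) ∧ (∀ a b, G.Adj a b → (D a b ∨ D b a)) ∧
  (∀ a b, D a b → ¬ D b a)

/-- The directed relation D is acyclic. -/
def AcyclicRel {V : Type*} (D : V → V → Prop) : Prop :=
  ¬ ∃ a, Relation.TransGen D a a

/-- D has an unshielded collider a → b ← c with a, c non-adjacent in G. -/
def HasUnshieldedCollider {V : Type*} (G : SimpleGraph V) (D : V → V → Prop) : Prop :=
  ∃ a b c, D a b ∧ D c b ∧ a ≠ c ∧ ¬ G.Adj a c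

namespace Stmt4Aux
open SimpleGraph


variable {V : Type*} (U : SimpleGraph V)

/-- reachability within a vertex set -/
def Reach (W : Set V) : V → V → Prop :=
  Relation.ReflTransGen (fun x y => U.Adj x y ∧ x ∈ W ∧ y ∈ W)

variable {U}

lemma Reach.symm {W : Set V} {a b : V} (h : Reach U W a b) : Reach U W b a :=
  letI : Std.Symm (fun x y : V => U.Adj x y ∧ x ∈ W ∧ y ∈ W) := ⟨fun _ _ h => ⟨h.1.symm, h.2.2, h.2.1⟩⟩
  Std.Symm.symm (r := Relation.ReflTransGen (fun x y : V => U.Adj x y ∧ x ∈ W ∧ y ∈ W)) _ _ h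

lemma Reach.trans {W : Set V} {a b c : V} (h : Reach U W a b) (h2 : Reach U W b c) :
    Reach U W a c := Relation.ReflTransGen.trans h h2

lemma Reach.refl {W : Set V} {a : V} : Reach U W a a := Relation.ReflTransGen.refl

lemma Reach.single {W : Set V} {a b : V} (h : U.Adj a b ∧ a ∈ W ∧ b ∈ W) :
    Reach U W a b := Relation.ReflTransGen.single h

lemma reach_insert {W : Set V} {t b : V} :
    ∀ {c : V}, Reach U (insert t W) c b → c ∈ W →
      Reach U W c b ∨ ∃ y, y ∈ W ∧ Reach U W c y ∧ U.Adj y t := by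
  intro c h
  induction h using Relation.ReflTransGen.head_induction_on with
  | refl => exact fun _ => Or.inl .refl
  | head step rest ih =>
    rename_i u x
    intro hu
    obtain ⟨hadj, _, hx⟩ := step
    rcases Set.mem_insert_iff.mp hx with hx | hx
    · exact Or.inr ⟨u, hu, .refl, hx ▸ hadj⟩
    · rcases ih hx with h1 | ⟨y, hy, hry, hyt⟩
      · exact Or.inl (.head ⟨hadj, hu, hx⟩ h1)
      · exact Or.inr ⟨y, hy, .head ⟨hadj, hu, hx⟩ hry, hyt⟩

lemma reach_restrict {W : Set V} {a : V} :
    ∀ {u v : V}, Reach U W u v → Reach U W a u →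
      Reach U {z | z ∈ W ∧ Reach U W a z} u v := by
  intro u v h
  induction h using Relation.ReflTransGen.head_induction_on with
  | refl => exact fun _ => .refl
  | head step rest ih =>
    intro hac
    have hax : Reach U W a _ := hac.trans (Relation.ReflTransGen.single step)
    exact .head ⟨step.1, ⟨step.2.1, hac⟩, ⟨step.2.2, hax⟩⟩ (ih hax)

lemma reach_walk {W : Set V} : ∀ {u v : V}, Reach U W u v → u ∈ W →
    ∃ p : U.Walk u v, ∀ z ∈ p.support, z ∈ W := by
  intro u v h
  induction h using Relation.ReflTransGen.head_induction_on with
  | refl => exact fun hu => ⟨.nil, by simp [hu]⟩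
  | head step rest ih =>
    intro hu
    obtain ⟨p, hp⟩ := ih step.2.2
    refine ⟨.cons step.1 p, ?_⟩
    intro z hz
    rcases List.mem_cons.mp (by simpa [SimpleGraph.Walk.support_cons] using hz) with rfl | hz
    · exact hu
    · exact hp z hz

lemma reach_pair {a b : V} (hne : a ≠ b) (hnadj : ¬U.Adj a b) {W : Set V}
    (hW : W ⊆ {a, b}) : ¬ Reach U W a b := by
  intro h
  rcases h.cases_head with h | ⟨c, ⟨hadj, _, hc⟩, _⟩
  · exact hne h
  · rcases hW hc with rfl | rfl
    · exact hadj.ne rfl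
    · exact hnadj hadj


open SimpleGraph


lemma exists_min_walk {x y : V} (C : Set V)
    (h : ∃ p : U.Walk x y, ∀ z ∈ p.support, z ∈ C) :
    ∃ p : U.Walk x y, p.IsPath ∧ (∀ z ∈ p.support, z ∈ C) ∧
      ∀ r : U.Walk x y, (∀ z ∈ r.support, z ∈ C) → p.length ≤ r.length := by
  classical
  have hn : ∃ n, ∃ p : U.Walk x y, p.length = n ∧ ∀ z ∈ p.support, z ∈ C := by
    obtain ⟨p, hp⟩ := h
    exact ⟨p.length, p, rfl, hp⟩
  obtain ⟨p, hlen, hp⟩ := Nat.find_spec hn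
  refine ⟨p.bypass, p.bypass_isPath, fun z hz => hp z (p.support_bypass_subset hz), ?_⟩
  intro r hr
  have h1 : p.bypass.length ≤ Nat.find hn := hlen ▸ p.length_bypass_le
  exact h1.trans (Nat.find_min' hn ⟨r, rfl, hr⟩)

lemma two_le_length {x y : V} (p : U.Walk x y) (hxy : x ≠ y) (hnadj : ¬ U.Adj x y) :
    2 ≤ p.length := by
  cases p with
  | nil => exact absurd rfl hxy
  | cons h q =>
    cases q with
    | nil => exact absurd h hnadj
    | cons h' q' => simp only [Walk.length_cons]; omega

lemma edges_of_length_one {u v : V} (p : U.Walk u v) (h : p.length = 1) :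
    p.edges = [s(u, v)] := by
  cases p with
  | nil => simp at h
  | cons hadj q =>
    have hq : q.length = 0 := by simpa using h
    have := q.eq_of_length_eq_zero hq
    subst this
    have : q.edges = [] := List.eq_nil_of_length_eq_zero (by simp [Walk.length_edges, hq])
    simp [Walk.edges_cons, this]

lemma shortcut_aux {x y a b : V} (C : Set V) (q : U.Walk x a) (r : U.Walk a y)
    (hmin : ∀ s : U.Walk x y, (∀ z ∈ s.support, z ∈ C) → (q.append r).length ≤ s.length)
    (hsupp : ∀ z ∈ (q.append r).support, z ∈ C)
    (hb : b ∈ r.support) (hadj : U.Adj a b) (hne : s(a, b) ∉ (q.append r).edges) : False := by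
  obtain ⟨r₁, r₂, rfl⟩ := Walk.mem_support_iff_exists_append.mp hb
  have hr1 : 1 ≤ r₁.length := by
    rcases Nat.eq_zero_or_pos r₁.length with h0 | h
    · exact absurd (r₁.eq_of_length_eq_zero h0) hadj.ne
    · exact h
  by_cases hr11 : r₁.length = 1
  · exact hne (by
      rw [Walk.edges_append, Walk.edges_append]
      simp [edges_of_length_one r₁ hr11])
  · have hw : ∀ z ∈ (q.append (Walk.cons hadj r₂)).support, z ∈ C := by
      intro z hz
      rcases (Walk.mem_support_append_iff _ _).mp hz with hz | hz
      · exact hsupp z ((Walk.mem_support_append_iff _ _).mpr (Or.inl hz))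
      · rw [Walk.support_cons] at hz
        rcases List.mem_cons.mp hz with hzb | hz
        · exact hzb ▸ hsupp a ((Walk.mem_support_append_iff _ _).mpr (Or.inl q.end_mem_support))
        · exact hsupp z ((Walk.mem_support_append_iff _ _).mpr (Or.inr
            ((Walk.mem_support_append_iff _ _).mpr (Or.inr hz))))
    have := hmin _ hw
    rw [Walk.length_append, Walk.length_append, Walk.length_append, Walk.length_cons] at this
    omega

lemma shortcut {x y a b : V} (C : Set V) (p : U.Walk x y)
    (hmin : ∀ r : U.Walk x y, (∀ z ∈ r.support, z ∈ C) → p.length ≤ r.length)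
    (hsupp : ∀ z ∈ p.support, z ∈ C)
    (ha : a ∈ p.support) (hb : b ∈ p.support)
    (hadj : U.Adj a b) (hne : s(a, b) ∉ p.edges) : False := by
  obtain ⟨q, r, rfl⟩ := Walk.mem_support_iff_exists_append.mp ha
  rcases (Walk.mem_support_append_iff _ _).mp hb with hbq | hbr
  · obtain ⟨q₁, q₂, rfl⟩ := Walk.mem_support_iff_exists_append.mp hbq
    rw [← Walk.append_assoc] at hmin hsupp hne
    refine shortcut_aux C q₁ (q₂.append r) hmin hsupp ?_ hadj.symm ?_
    · exact (Walk.mem_support_append_iff _ _).mpr (Or.inl q₂.end_mem_support)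
    · rwa [Sym2.eq_swap] at hne
  · exact shortcut_aux C q r hmin hsupp hbr hadj hne

lemma no_chordless (hch : ChordalGraph U) {Ca Cb : Set V} {x y : V} (hxy : x ≠ y)
    (hnadj : ¬ U.Adj x y)
    (hdisj : ∀ u v, u ∈ Ca → v ∈ Cb → ¬ U.Adj u v)
    (hCab : ∀ z, z ∈ Ca → z ∈ Cb → False)
    (hxa : x ∉ Ca) (hxb : x ∉ Cb) (hya : y ∉ Ca) (hyb : y ∉ Cb)
    (hpa : ∃ p : U.Walk x y, ∀ z ∈ p.support, z = x ∨ z = y ∨ z ∈ Ca)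
    (hpb : ∃ q : U.Walk x y, ∀ z ∈ q.support, z = x ∨ z = y ∨ z ∈ Cb) : False := by
  obtain ⟨p, hp, hpC, hpmin⟩ := exists_min_walk {z | z = x ∨ z = y ∨ z ∈ Ca} hpa
  obtain ⟨q, hq, hqC, hqmin⟩ := exists_min_walk {z | z = x ∨ z = y ∨ z ∈ Cb} hpb
  have hp2 : 2 ≤ p.length := two_le_length p hxy hnadj
  have hq2 : 2 ≤ q.length := two_le_length q hxy hnadj
  have hmemp : ∀ z, z ∈ p.support → z ∈ q.support → z = x ∨ z = y := by
    intro z hzp hzq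
    rcases hpC z hzp with h | h | h
    · exact Or.inl h
    · exact Or.inr h
    · rcases hqC z hzq with h' | h' | h'
      · exact Or.inl h'
      · exact Or.inr h'
      · exact (hCab z h h').elim
  set q' := q.reverse with hq'def
  have hq'path : q'.IsPath := hq.reverse
  set c := p.append q' with hcdef
  have hclen : c.length = p.length + q.length := by
    rw [hcdef, Walk.length_append, hq'def, Walk.length_reverse]
  have hediff : ∀ e, e ∈ p.edges → e ∈ q.edges → False := by
    intro e hep heq
    induction e using Sym2.ind with
    | _ u v =>
      have hadj : U.Adj u v := (U.mem_edgeSet).mp (p.edges_subset_edgeSet hep)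
      have hu : u = x ∨ u = y :=
        hmemp u (p.fst_mem_support_of_mem_edges hep) (q.fst_mem_support_of_mem_edges heq)
      have hv : v = x ∨ v = y :=
        hmemp v (p.snd_mem_support_of_mem_edges hep) (q.snd_mem_support_of_mem_edges heq)
      rcases hu with rfl | rfl <;> rcases hv with rfl | rfl
      · exact hadj.ne rfl
      · exact hnadj hadj
      · exact hnadj hadj.symm
      · exact hadj.ne rfl
  have hctrail : c.IsTrail := by
    constructor
    rw [hcdef, Walk.edges_append, hq'def, Walk.edges_reverse]
    exact List.Nodup.append hp.edges_nodup (List.nodup_reverse.mpr hq.edges_nodup)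
      (fun e he he' => hediff e he (List.mem_reverse.mp he'))
  have hnodp : p.support.Nodup := hp.support_nodup
  have hnodq : q'.support.Nodup := hq'path.support_nodup
  have hps : p.support = x :: p.support.tail := p.support_eq_cons
  have hqs : q'.support = y :: q'.support.tail := q'.support_eq_cons
  have hsupptail : c.support.tail.Nodup := by
    have hc2 : c.support.tail = p.support.tail ++ q'.support.tail := by
      rw [hcdef, Walk.support_append, hps]
      simp
    rw [hc2]
    refine List.Nodup.append ?_ ?_ ?_
    · rw [hps] at hnodp; exact (List.nodup_cons.mp hnodp).2
    · rw [hqs] at hnodq; exact (List.nodup_cons.mp hnodq).2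
    · intro z hzp hzq
      have hzx : z ≠ x := by
        rintro rfl
        rw [hps] at hnodp; exact (List.nodup_cons.mp hnodp).1 hzp
      have hzy : z ≠ y := by
        rintro rfl
        rw [hqs] at hnodq; exact (List.nodup_cons.mp hnodq).1 hzq
      have hz1 : z ∈ p.support := by rw [hps]; exact List.mem_cons_of_mem _ hzp
      have hz2 : z ∈ q.support := by
        have hz' : z ∈ q'.support := by rw [hqs]; exact List.mem_cons_of_mem _ hzq
        rw [hq'def, Walk.support_reverse] at hz'; exact List.mem_reverse.mp hz'
      rcases hpC z hz1 with h | h | h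
      · exact hzx h
      · exact hzy h
      rcases hqC z hz2 with h' | h' | h'
      · exact hzx h'
      · exact hzy h'
      exact hCab z h h'
  have hcyc : c.IsCycle := by
    refine ⟨⟨hctrail, fun h => ?_⟩, hsupptail⟩
    rw [h] at hclen; simp at hclen; omega
  obtain ⟨u, v, hu, hv, huv, hne⟩ := hch c hcyc (by omega)
  have hnep : s(u, v) ∉ p.edges := fun h =>
    hne (by rw [hcdef, Walk.edges_append]; exact List.mem_append_left _ h)
  have hneq : s(u, v) ∉ q.edges := fun h =>
    hne (by
      rw [hcdef, Walk.edges_append, hq'def, Walk.edges_reverse]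
      exact List.mem_append_right _ (List.mem_reverse.mpr h))
  rw [hcdef] at hu hv
  have humem : u ∈ p.support ∨ u ∈ q.support := by
    rcases (Walk.mem_support_append_iff _ _).mp hu with h | h
    · exact Or.inl h
    · right; rw [hq'def, Walk.support_reverse] at h; exact List.mem_reverse.mp h
  have hvmem : v ∈ p.support ∨ v ∈ q.support := by
    rcases (Walk.mem_support_append_iff _ _).mp hv with h | h
    · exact Or.inl h
    · right; rw [hq'def, Walk.support_reverse] at h; exact List.mem_reverse.mp h
  by_cases hup : u ∈ p.support <;> by_cases hvp : v ∈ p.support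
  · exact shortcut _ p hpmin hpC hup hvp huv hnep
  · have hvq : v ∈ q.support := hvmem.resolve_left hvp
    have hvCb : v ∈ Cb := by
      rcases hqC v hvq with h | h | h
      · exact absurd (h ▸ p.start_mem_support) hvp
      · exact absurd (h ▸ p.end_mem_support) hvp
      · exact h
    rcases hpC u hup with rfl | rfl | h
    · exact shortcut _ q hqmin hqC q.start_mem_support hvq huv hneq
    · exact shortcut _ q hqmin hqC q.end_mem_support hvq huv hneq
    · exact hdisj u v h hvCb huv
  · have huq : u ∈ q.support := humem.resolve_left hup
    have huCb : u ∈ Cb := by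
      rcases hqC u huq with h | h | h
      · exact absurd (h ▸ p.start_mem_support) hup
      · exact absurd (h ▸ p.end_mem_support) hup
      · exact h
    rcases hpC v hvp with rfl | rfl | h
    · exact shortcut _ q hqmin hqC q.start_mem_support huq huv.symm
        (by rwa [Sym2.eq_swap] at hneq)
    · exact shortcut _ q hqmin hqC q.end_mem_support huq huv.symm
        (by rwa [Sym2.eq_swap] at hneq)
    · exact hdisj v u h huCb huv.symm
  · exact shortcut _ q hqmin hqC (humem.resolve_left hup) (hvmem.resolve_left hvp) huv hneq
def Cliq (U : SimpleGraph V) (S : Finset V) : Prop := ∀ a ∈ S, ∀ b ∈ S, a ≠ b → U.Adj a b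

def Simp (U : SimpleGraph V) (S : Finset V) (v : V) : Prop :=
  ∀ a ∈ S, ∀ c ∈ S, U.Adj v a → U.Adj v c → a ≠ c → U.Adj a c

lemma exists_min_card {α : Type*} (P : Finset α → Prop) (h : ∃ T, P T) :
    ∃ T, P T ∧ ∀ T', P T' → T.card ≤ T'.card := by
  classical
  have hn : ∃ n, ∃ T, P T ∧ T.card = n := by
    obtain ⟨T, hT⟩ := h
    exact ⟨T.card, T, hT, rfl⟩
  obtain ⟨T, hT, hc⟩ := Nat.find_spec hn
  exact ⟨T, hT, fun T' h' => hc ▸ Nat.find_min' hn ⟨T', h', rfl⟩⟩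

theorem dirac (hch : ChordalGraph U) :
    ∀ (n : ℕ) (S : Finset V), S.card = n → S.Nonempty →
      Cliq U S ∨ ∃ x ∈ S, ∃ y ∈ S, x ≠ y ∧ ¬U.Adj x y ∧ Simp U S x ∧ Simp U S y := by
  classical
  intro n
  induction n using Nat.strong_induction_on with
  | _ n IH =>
    intro S hcard hS
    by_cases hcl : Cliq U S
    · exact Or.inl hcl
    right
    rw [Cliq] at hcl; push_neg at hcl
    obtain ⟨a, ha, b, hb, hab0, hnadj⟩ := hcl
    have hsep0 : ∃ T : Finset V, T ⊆ S ∧ a ∉ T ∧ b ∉ T ∧ ¬ Reach U (↑(S \ T)) a b := by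
      refine ⟨S \ {a, b}, Finset.sdiff_subset, by simp, by simp, ?_⟩
      refine reach_pair hab0 hnadj ?_
      intro z hz
      simp only [Finset.coe_sdiff, Set.mem_diff, Finset.mem_coe, Finset.mem_sdiff,
        Finset.mem_insert, Finset.mem_singleton, not_and, not_not] at hz
      have := hz.2 hz.1
      simpa using this
    obtain ⟨T, hT, hmin⟩ := exists_min_card _ hsep0
    set W : Set V := ↑(S \ T) with hWdef
    have hmemW : ∀ z, z ∈ W ↔ z ∈ S ∧ z ∉ T := by intro z; rw [hWdef]; simp
    have haW : a ∈ W := (hmemW a).mpr ⟨ha, hT.2.1⟩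
    have hbW : b ∈ W := (hmemW b).mpr ⟨hb, hT.2.2.1⟩
    have hsepW : ¬ Reach U W a b := hT.2.2.2
    have hnbr : ∀ t ∈ T, (∃ z, z ∈ W ∧ Reach U W a z ∧ U.Adj z t) ∧
        (∃ z, z ∈ W ∧ Reach U W b z ∧ U.Adj z t) := by
      intro t ht
      have htS : t ∈ S := hT.1 ht
      have hre : Reach U (↑(S \ T.erase t)) a b := by
        by_contra hre
        have hP : T.erase t ⊆ S ∧ a ∉ T.erase t ∧ b ∉ T.erase t ∧
            ¬ Reach U (↑(S \ T.erase t)) a b :=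
          ⟨(Finset.erase_subset _ _).trans hT.1,
            fun h => hT.2.1 (Finset.mem_of_mem_erase h),
            fun h => hT.2.2.1 (Finset.mem_of_mem_erase h), hre⟩
        have h1 := hmin _ hP
        have h2 : (T.erase t).card < T.card := Finset.card_erase_lt_of_mem ht
        omega
      have hset : (↑(S \ T.erase t) : Set V) = insert t W := by
        ext z
        rw [hWdef]
        by_cases hzt : z = t <;> simp [hzt, htS, ht, Finset.mem_erase] <;> tauto
      rw [hset] at hre
      constructor
      · rcases reach_insert hre haW with h | hz
        · exact absurd h hsepW
        · exact hz
      · rcases reach_insert hre.symm hbW with h | hz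
        · exact absurd h.symm hsepW
        · exact hz
    have hTclq : ∀ x ∈ T, ∀ y ∈ T, x ≠ y → U.Adj x y := by
      intro x hx y hy hxyne
      by_contra hxynadj
      obtain ⟨⟨ax, haxW, haxR, haxA⟩, ⟨bx, hbxW, hbxR, hbxA⟩⟩ := hnbr x hx
      obtain ⟨⟨ay, hayW, hayR, hayA⟩, ⟨by', hbyW, hbyR, hbyA⟩⟩ := hnbr y hy
      have hxW : x ∉ W := fun h => ((hmemW x).mp h).2 hx
      have hyW : y ∉ W := fun h => ((hmemW y).mp h).2 hy
      refine no_chordless hch (Ca := {z | z ∈ W ∧ Reach U W a z})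
        (Cb := {z | z ∈ W ∧ Reach U W b z}) hxyne hxynadj ?_ ?_ ?_ ?_ ?_ ?_ ?_ ?_
      · intro u v hu hv hadj
        exact hsepW (hu.2.trans ((Reach.single ⟨hadj, hu.1, hv.1⟩).trans hv.2.symm))
      · intro z hz hz'
        exact hsepW (hz.2.trans hz'.2.symm)
      · exact fun h => hxW h.1
      · exact fun h => hxW h.1
      · exact fun h => hyW h.1
      · exact fun h => hyW h.1
      · obtain ⟨w, hw⟩ := reach_walk (reach_restrict (haxR.symm.trans hayR) haxR) ⟨haxW, haxR⟩
        refine ⟨Walk.cons haxA.symm (w.concat hayA), ?_⟩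
        intro z hz
        simp only [Walk.support_cons, List.mem_cons] at hz
        rcases hz with rfl | hz
        · exact Or.inl rfl
        rw [Walk.support_concat] at hz
        rcases List.mem_append.mp hz with hz | hz
        · exact Or.inr (Or.inr (hw z hz))
        · exact Or.inr (Or.inl (List.mem_singleton.mp hz))
      · obtain ⟨w, hw⟩ := reach_walk (reach_restrict (hbxR.symm.trans hbyR) hbxR) ⟨hbxW, hbxR⟩
        refine ⟨Walk.cons hbxA.symm (w.concat hbyA), ?_⟩
        intro z hz
        simp only [Walk.support_cons, List.mem_cons] at hz
        rcases hz with rfl | hz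
        · exact Or.inl rfl
        rw [Walk.support_concat] at hz
        rcases List.mem_append.mp hz with hz | hz
        · exact Or.inr (Or.inr (hw z hz))
        · exact Or.inr (Or.inl (List.mem_singleton.mp hz))
    have hside : ∀ u w : V, u ∈ S → w ∈ S → u ∉ T → w ∉ T → ¬ Reach U W u w →
        (∀ t ∈ T, ∃ z, z ∈ W ∧ Reach U W u z ∧ U.Adj z t) →
        ∃ v, v ∈ W ∧ Reach U W u v ∧ Simp U S v := by
      intro u w huS hwS huT hwT hsep hnb
      set Su : Finset V := (S \ T).filter (fun z => Reach U W u z) with hSudef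
      have hmemSu : ∀ z, z ∈ Su ↔ (z ∈ W ∧ Reach U W u z) := by
        intro z
        rw [hSudef, Finset.mem_filter, Finset.mem_sdiff, ← hmemW z]
      set S₁ : Finset V := Su ∪ T with hS₁def
      have hS₁S : S₁ ⊆ S := by
        refine Finset.union_subset ?_ hT.1
        intro z hz
        exact ((hmemW z).mp ((hmemSu z).mp hz).1).1
      have hwS₁ : w ∉ S₁ := by
        intro hw
        rcases Finset.mem_union.mp hw with hw | hw
        · exact hsep ((hmemSu w).mp hw).2
        · exact hwT hw
      have hcard₁ : S₁.card < n := by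
        have := Finset.card_lt_card (Finset.ssubset_iff_of_subset hS₁S |>.mpr ⟨w, hwS, hwS₁⟩)
        omega
      have huSu : u ∈ Su := (hmemSu u).mpr ⟨(hmemW u).mpr ⟨huS, huT⟩, Reach.refl⟩
      have hlift : ∀ v, v ∈ Su → Simp U S₁ v → ∃ v', v' ∈ W ∧ Reach U W u v' ∧ Simp U S v' := by
        intro v hv hsimp
        obtain ⟨hvW, hvR⟩ := (hmemSu v).mp hv
        refine ⟨v, hvW, hvR, ?_⟩
        intro a' ha' c' hc' hva hvc hne
        have hstep : ∀ z ∈ S, U.Adj v z → z ∈ S₁ := by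
          intro z hz hadj
          by_cases hzT : z ∈ T
          · exact Finset.mem_union_right _ hzT
          · refine Finset.mem_union_left _ ((hmemSu z).mpr ⟨(hmemW z).mpr ⟨hz, hzT⟩, ?_⟩)
            exact hvR.trans (Reach.single ⟨hadj, hvW, (hmemW z).mpr ⟨hz, hzT⟩⟩)
        exact hsimp a' (hstep a' ha' hva) c' (hstep c' hc' hvc) hva hvc hne
      rcases IH S₁.card hcard₁ S₁ rfl ⟨u, Finset.mem_union_left _ huSu⟩ with hclq |
        ⟨p, hpS₁, q, hqS₁, hpq, hnadjpq, hsp, hsq⟩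
      · exact hlift u huSu (fun a' ha' c' hc' _ _ hne => hclq a' ha' c' hc' hne)
      · rcases Finset.mem_union.mp hpS₁ with hpSu | hpT
        · exact hlift p hpSu hsp
        · rcases Finset.mem_union.mp hqS₁ with hqSu | hqT
          · exact hlift q hqSu hsq
          · exact absurd (hTclq p hpT q hqT hpq) hnadjpq
    obtain ⟨v₁, hv₁W, hv₁R, hv₁S⟩ :=
      hside a b ha hb hT.2.1 hT.2.2.1 hsepW (fun t ht => (hnbr t ht).1)
    obtain ⟨v₂, hv₂W, hv₂R, hv₂S⟩ :=
      hside b a hb ha hT.2.2.1 hT.2.1 (fun h => hsepW h.symm) (fun t ht => (hnbr t ht).2)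
    refine ⟨v₁, ((hmemW v₁).mp hv₁W).1, v₂, ((hmemW v₂).mp hv₂W).1, ?_, ?_, hv₁S, hv₂S⟩
    · rintro rfl
      exact hsepW (hv₁R.trans hv₂R.symm)
    · intro hadj
      exact hsepW (hv₁R.trans ((Reach.single ⟨hadj, hv₁W, hv₂W⟩).trans hv₂R.symm))
def GoodL (U : SimpleGraph V) : List V → Prop
  | [] => True
  | x :: t => (∀ a ∈ t, ∀ c ∈ t, U.Adj x a → U.Adj x c → a ≠ c → U.Adj a c) ∧ GoodL U t

lemma elim_exists [DecidableEq V] (hch : ChordalGraph U) : ∀ (n : ℕ) (S : Finset V) (A : V), S.card = n → A ∈ S →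
    ∃ l : List V, l.Nodup ∧ l.toFinset = S ∧ GoodL U l ∧ l.getLast? = some A := by
  classical
  intro n
  induction n using Nat.strong_induction_on with
  | _ n IH =>
    intro S A hcard hA
    by_cases h1 : S.card ≤ 1
    · have hsingle : S = {A} := by
        refine Finset.eq_singleton_iff_unique_mem.mpr ⟨hA, ?_⟩
        intro x hx
        exact Finset.card_le_one.mp h1 x hx A hA
      exact ⟨[A], by simp, by simp [hsingle], ⟨by simp, trivial⟩, rfl⟩
    · push_neg at h1
      have hcases := dirac (U := U) hch S.card S rfl (Finset.card_pos.mp (by omega))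
      have hsimp : ∃ x ∈ S, x ≠ A ∧ Simp U S x := by
        rcases hcases with hclq | ⟨x, hx, y, hy, hxy, _, hsx, hsy⟩
        · obtain ⟨x, hx, hxA⟩ := Finset.exists_mem_ne h1 A
          exact ⟨x, hx, hxA, fun a' ha' c' hc' _ _ hne => hclq a' ha' c' hc' hne⟩
        · by_cases hxA : x = A
          · refine ⟨y, hy, ?_, hsy⟩
            rintro rfl
            exact hxy hxA
          · exact ⟨x, hx, hxA, hsx⟩
      obtain ⟨x, hx, hxA, hsimpx⟩ := hsimp
      have hA' : A ∈ S.erase x := Finset.mem_erase.mpr ⟨Ne.symm hxA, hA⟩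
      have hc' : (S.erase x).card < n := by
        rw [Finset.card_erase_of_mem hx]; omega
      obtain ⟨l', hn', ht', hg', hl'⟩ := IH _ hc' (S.erase x) A rfl hA'
      refine ⟨x :: l', ?_, ?_, ⟨?_, hg'⟩, ?_⟩
      · refine List.nodup_cons.mpr ⟨?_, hn'⟩
        intro hxl'
        have : x ∈ S.erase x := ht' ▸ List.mem_toFinset.mpr hxl'
        exact (Finset.mem_erase.mp this).1 rfl
      · rw [List.toFinset_cons, ht', Finset.insert_erase hx]
      · intro a' ha' c' hc' hxa hxc hne
        have ha'S : a' ∈ S := (Finset.mem_erase.mp (ht' ▸ List.mem_toFinset.mpr ha')).2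
        have hc'S : c' ∈ S := (Finset.mem_erase.mp (ht' ▸ List.mem_toFinset.mpr hc')).2
        exact hsimpx a' ha'S c' hc'S hxa hxc hne
      · cases l' with
        | nil => simp at hl'
        | cons h t => rw [List.getLast?_cons_cons]; exact hl'

section Order
variable [DecidableEq V]

def before (l : List V) (u v : V) : Prop :=
  u ∈ l ∧ v ∈ l ∧ l.idxOf u < l.idxOf v

lemma before_total {l : List V} {u v : V} (hu : u ∈ l) (hv : v ∈ l) (hne : u ≠ v) :
    before l u v ∨ before l v u := by
  rcases lt_trichotomy (l.idxOf u) (l.idxOf v) with h | h | h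
  · exact Or.inl ⟨hu, hv, h⟩
  · exact absurd ((List.idxOf_inj hu).mp h) hne
  · exact Or.inr ⟨hv, hu, h⟩

lemma before_asymm {l : List V} {u v : V} (h1 : before l u v) (h2 : before l v u) : False :=
  lt_asymm h1.2.2 h2.2.2

lemma before_irrefl {l : List V} {u : V} (h : before l u u) : False :=
  lt_irrefl _ h.2.2

lemma before_trans {l : List V} {u v w : V} (h1 : before l u v) (h2 : before l v w) :
    before l u w := ⟨h1.1, h2.2.1, h1.2.2.trans h2.2.2⟩

lemma good_collide {a b c : V} : ∀ (l : List V), GoodL U l → before l b a → before l b c →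
    U.Adj b a → U.Adj b c → a ≠ c → U.Adj a c := by
  intro l
  induction l with
  | nil => exact fun _ h1 _ _ _ _ => absurd h1.1 List.not_mem_nil
  | cons x t ih =>
    intro hl h1 h2 hba hbc hac
    obtain ⟨hbm, ham, hlt1⟩ := h1
    obtain ⟨_, hcm, hlt2⟩ := h2
    by_cases hbx : b = x
    · subst hbx
      have hax : a ≠ b := by
        rintro rfl
        rw [List.idxOf_cons_self] at hlt1
        omega
      have hcx : c ≠ b := by
        rintro rfl
        rw [List.idxOf_cons_self] at hlt2
        omega
      have hat : a ∈ t := (List.mem_cons.mp ham).resolve_left hax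
      have hct : c ∈ t := (List.mem_cons.mp hcm).resolve_left hcx
      exact hl.1 a hat c hct hba hbc hac
    · have hbt : b ∈ t := (List.mem_cons.mp hbm).resolve_left hbx
      have hilt : ∀ z, z ∈ x :: t → (x :: t).idxOf b < (x :: t).idxOf z →
          z ∈ t ∧ t.idxOf b < t.idxOf z := by
        intro z hz hlt
        have hzx : z ≠ x := by
          rintro rfl
          rw [List.idxOf_cons_self] at hlt
          omega
        have hzt : z ∈ t := (List.mem_cons.mp hz).resolve_left hzx
        rw [List.idxOf_cons_ne _ (Ne.symm hbx), List.idxOf_cons_ne _ (Ne.symm hzx)] at hlt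
        exact ⟨hzt, by omega⟩
      obtain ⟨hat, hlta⟩ := hilt a ham hlt1
      obtain ⟨hct, hltc⟩ := hilt c hcm hlt2
      exact ih hl.2 ⟨hbt, hat, hlta⟩ ⟨hbt, hct, hltc⟩ hba hbc hac

lemma last_before {A B : V} : ∀ (l : List V), l.Nodup → l.getLast? = some A → B ∈ l →
    B ≠ A → before l B A := by
  intro l
  induction l with
  | nil => simp
  | cons x t ih =>
    intro hn hlast hB hBA
    cases t with
    | nil =>
      have h1 : B = x := by simpa using hB
      have h2 : x = A := by simpa using hlast
      exact absurd (h1.trans h2) hBA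
    | cons y t' =>
      rw [List.getLast?_cons_cons] at hlast
      have hA : A ∈ y :: t' := List.mem_of_getLast? hlast
      have hAx : A ≠ x := by
        rintro rfl
        exact (List.nodup_cons.mp hn).1 hA
      by_cases hBx : B = x
      · subst hBx
        refine ⟨List.mem_cons_self, List.mem_cons_of_mem _ hA, ?_⟩
        rw [List.idxOf_cons_self, List.idxOf_cons_ne _ (Ne.symm hAx)]
        omega
      · have hBt : B ∈ y :: t' := (List.mem_cons.mp hB).resolve_left hBx
        obtain ⟨m1, m2, m3⟩ := ih (List.nodup_cons.mp hn).2 hlast hBt hBA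
        refine ⟨List.mem_cons_of_mem _ m1, List.mem_cons_of_mem _ m2, ?_⟩
        rw [List.idxOf_cons_ne _ (Ne.symm hBx), List.idxOf_cons_ne _ (Ne.symm hAx)]
        omega

lemma half (hch : ChordalGraph U) {A B : V} (hAB : U.Adj A B) :
    ∃ D : V → V → Prop, IsOrientationOf U D ∧ AcyclicRel D ∧
      ¬ HasUnshieldedCollider U D ∧ D A B := by
  classical
  have hex : ∀ S : Finset V, ∃ l : List V, l.Nodup ∧ l.toFinset = S ∪ {A, B} ∧ GoodL U l ∧
      l.getLast? = some A := by
    intro S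
    exact elim_exists (U := U) hch (S ∪ {A, B}).card (S ∪ {A, B}) A rfl (by simp)
  choose lst hnodup htfin hgood hlast using hex
  have hmem : ∀ (S : Finset V) (z : V), z ∈ lst S ↔ z ∈ S ∪ {A, B} := by
    intro S z
    rw [← List.mem_toFinset, htfin S]
  set 𝒰 := Ultrafilter.of (Filter.atTop : Filter (Finset V)) with h𝒰
  have hatTop : ∀ (T : Finset V), {S : Finset V | T ⊆ S} ∈ 𝒰 := by
    intro T
    have h1 : Set.Ici T ∈ (Filter.atTop : Filter (Finset V)) := Filter.Ici_mem_atTop T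
    have h2 := Ultrafilter.of_le (Filter.atTop : Filter (Finset V)) h1
    convert h2 using 1
    exact Iff.rfl
  have hnonempty : ∀ {s : Set (Finset V)}, s ∈ 𝒰 → s.Nonempty := by
    intro s hs
    exact Ultrafilter.nonempty_of_mem hs
  set R : V → V → Prop := fun u v => {S : Finset V | before (lst S) u v} ∈ 𝒰 with hR
  have hRtrans : ∀ {u v w : V}, R u v → R v w → R u w := by
    intro u v w h1 h2
    refine Filter.mem_of_superset (Filter.inter_mem h1 h2) ?_
    intro S hS
    exact before_trans hS.1 hS.2
  have hRasymm : ∀ {u v : V}, R u v → R v u → False := by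
    intro u v h1 h2
    obtain ⟨S, hS1, hS2⟩ := hnonempty (Filter.inter_mem h1 h2)
    exact before_asymm hS1 hS2
  have hRirrefl : ∀ {u : V}, R u u → False := by
    intro u h
    obtain ⟨S, hS⟩ := hnonempty h
    exact before_irrefl hS
  have hRtotal : ∀ {u v : V}, u ≠ v → R u v ∨ R v u := by
    intro u v hne
    have hE : {S : Finset V | u ∈ lst S ∧ v ∈ lst S} ∈ 𝒰 := by
      refine Filter.mem_of_superset (hatTop {u, v}) ?_
      intro S hS
      have hu : u ∈ S := hS (by simp)
      have hv : v ∈ S := hS (by simp)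
      exact ⟨(hmem S u).mpr (by simp [hu]), (hmem S v).mpr (by simp [hv])⟩
    have hun : {S : Finset V | before (lst S) u v} ∪ {S : Finset V | before (lst S) v u} ∈ 𝒰 :=
      Filter.mem_of_superset hE (fun S hS => before_total hS.1 hS.2 hne)
    exact Ultrafilter.union_mem_iff.mp hun
  refine ⟨fun u v => U.Adj u v ∧ R v u, ⟨fun a b h => h.1, ?_, ?_⟩, ?_, ?_, ?_⟩
  · intro a b hadj
    rcases hRtotal hadj.ne with h | h
    · exact Or.inr ⟨hadj.symm, h⟩
    · exact Or.inl ⟨hadj, h⟩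
  · exact fun a b h h' => hRasymm h.2 h'.2
  · rintro ⟨a, hTG⟩
    have key : ∀ u v : V, Relation.TransGen (fun u v => U.Adj u v ∧ R v u) u v → R v u := by
      intro u v h
      induction h with
      | single h => exact h.2
      | tail _ h ih => exact hRtrans h.2 ih
    exact hRirrefl (key a a hTG)
  · rintro ⟨a, b, c, ⟨hab, hba⟩, ⟨hcb, hbc⟩, hac, hnadj⟩
    obtain ⟨S, h1, h2⟩ := hnonempty (Filter.inter_mem hba hbc)
    exact hnadj (good_collide (lst S) (hgood S) h1 h2 hab.symm hcb.symm hac)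
  · refine ⟨hAB, ?_⟩
    have huniv : {S : Finset V | before (lst S) B A} = Set.univ := by
      ext S
      simp only [Set.mem_setOf_eq, Set.mem_univ, iff_true]
      exact last_before (lst S) (hnodup S) (hlast S) ((hmem S B).mpr (by simp)) hAB.ne'
    rw [hR]
    simp only [huniv]
    exact Filter.univ_mem
end Order

end Stmt4Aux

/-- If U is chordal then for every edge {A,B} there exist two acyclic
orientations of U without unshielded colliders, one orienting A→B, the other A←B. -/
theorem stmt4 {V : Type*} (U : SimpleGraph V) (hchordal : ChordalGraph U)
    {A B : V} (hAB : U.Adj A B) :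
    ∃ D₁ D₂ : V → V → Prop,
      IsOrientationOf U D₁ ∧ AcyclicRel D₁ ∧ ¬ HasUnshieldedCollider U D₁ ∧
      IsOrientationOf U D₂ ∧ AcyclicRel D₂ ∧ ¬ HasUnshieldedCollider U D₂ ∧
      D₁ A B ∧ D₂ B A := by
  classical
  obtain ⟨D₁, h1, h2, h3, h4⟩ := Stmt4Aux.half hchordal hAB
  obtain ⟨D₂, g1, g2, g3, g4⟩ := Stmt4Aux.half hchordal hAB.symm
  exact ⟨D₁, D₂, h1, h2, h3, g1, g2, g3, h4, g4⟩
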